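/- Let p be a prime with p ≡ 1 (mod 4). Then the Legendre symbol (D_p(2,2)/p) equals 1 if p ≡ 1 (mod 8), and equals 0 if p ≡ 5 (mod 8). -/

import Mathlib

/-- `Dp p b c` is the determinant of the `(p-1) × (p-1)` matrix whose `(i,j)`-entry
(for `1 ≤ i, j ≤ p-1`) is `(i² + b·i·j + c·j²)^(p-2)`. -/
noncomputable def Dp (p : ℕ) (b c : ℤ) : ℤ :=
  Matrix.det (Matrix.of fun i j : Fin (p - 1) =>
    (((i : ℕ) + 1 : ℤ) ^ 2 + b * ((i : ℕ) + 1) * ((j : ℕ) + 1)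
      + c * ((j : ℕ) + 1) ^ 2) ^ (p - 2))

open Finset Matrix

namespace Stmt1



variable {p : ℕ} [hp : Fact p.Prime]

noncomputable def hf (p : ℕ) (t : ZMod p) : ZMod p := (t^2 + 2*t + 2)^(p-2)

noncomputable def cu (p : ℕ) [NeZero p] (k : ℕ) : ZMod p :=
  ∑ u : (ZMod p)ˣ, (u : ZMod p)^k * hf p u

lemma sum_units_eq {M : Type*} [AddCommMonoid M] (f : ZMod p → M) (h0 : f 0 = 0) :
    ∑ u : (ZMod p)ˣ, f u = ∑ t : ZMod p, f t := by
  classical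
  rw [← Finset.sum_erase (Finset.univ) (a := (0 : ZMod p)) h0]
  apply Finset.sum_bij (fun (u : (ZMod p)ˣ) _ => (u : ZMod p))
  · intro u _
    exact Finset.mem_erase.2 ⟨u.ne_zero, Finset.mem_univ _⟩
  · intro a _ b _ hab
    exact Units.ext hab
  · intro t ht
    have htne : t ≠ 0 := (Finset.mem_erase.1 ht).1
    exact ⟨(htne.isUnit).unit, Finset.mem_univ _, (htne.isUnit).unit_spec.symm⟩
  · intro u _; rfl

lemma sum_pow_zmod (m : ℕ) (hm : 0 < m) :
    ∑ t : ZMod p, t^m = if (p-1) ∣ m then -1 else 0 := by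
  classical
  rw [← sum_units_eq (fun t => t^m) (by simp [zero_pow hm.ne'])]
  simpa using FiniteField.sum_pow_units (ZMod p) m






-- L7
lemma sum_pow_mul_inv (k : ℕ) (hk1 : 1 ≤ k) (hk2 : k ≤ p-2) (r : ZMod p)
    (hsum : ∀ m, 0 < m → (∑ t : ZMod p, t^m) = if (p-1) ∣ m then -1 else 0) :
    ∑ t : ZMod p, t^k * (t - r)^(p-2) = -(k : ZMod p) * r^(k-1) := by
  classical
  have hp3 : 3 ≤ p := by omega
  have h1 : ∑ t : ZMod p, t^k * (t - r)^(p-2)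
      = ∑ t : ZMod p, (t + r)^k * t^(p-2) := by
    rw [← Fintype.sum_equiv (Equiv.addRight r) _ (fun t => t^k * (t-r)^(p-2))]
    intro t
    simp [Equiv.addRight]
  rw [h1]
  have h2 : ∀ t : ZMod p, (t + r)^k * t^(p-2)
      = ∑ j ∈ range (k+1), (r^(k-j) * (k.choose j)) * t^(j + p - 2) := by
    intro t
    rw [add_pow, Finset.sum_mul]
    refine Finset.sum_congr rfl fun j hj => ?_
    have hj' : j ≤ k := Nat.lt_succ_iff.mp (Finset.mem_range.mp hj)
    have : j + p - 2 = j + (p - 2) := by omega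
    rw [this, pow_add]
    ring
  simp_rw [h2]
  rw [Finset.sum_comm]
  have h3 : ∀ j ∈ range (k+1),
      (∑ t : ZMod p, (r^(k-j) * (k.choose j)) * t^(j + p - 2))
      = if j = 1 then -(k:ZMod p) * r^(k-1) else 0 := by
    intro j hj
    have hj' : j ≤ k := Nat.lt_succ_iff.mp (Finset.mem_range.mp hj)
    rw [← Finset.mul_sum, hsum (j + p - 2) (by omega)]
    by_cases hj1 : j = 1
    · subst hj1
      have : p - 1 ∣ 1 + p - 2 := by
        have : 1 + p - 2 = p - 1 := by omega
        simp [this]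
      rw [if_pos this, if_pos rfl]
      simp; ring
    · have hnd : ¬ (p - 1 ∣ j + p - 2) := by
        intro hd
        rcases hd with ⟨c, hc⟩
        match c with
        | 0 => omega
        | 1 => omega
        | (c+2) =>
          have h2c : (p-1)*2 ≤ (p-1)*(c+2) := Nat.mul_le_mul_left (p-1) (by omega)
          omega
      rw [if_neg hnd, if_neg hj1, mul_zero]
  rw [Finset.sum_congr rfl h3, Finset.sum_ite_eq' (range (k+1)) 1]
  rw [if_pos (Finset.mem_range.2 (by omega))]



-- x^(p-2) = x⁻¹ for x ≠ 0
lemma pow_psub2 (x : ZMod p) (hx : x ≠ 0) (hp3 : 3 ≤ p) : x^(p-2) = x⁻¹ := by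
  have h : x^(p-2) * x = 1 := by
    rw [← pow_succ]
    have : p - 2 + 1 = p - 1 := by omega
    rw [this, ZMod.pow_card_sub_one_eq_one hx]
  exact eq_inv_of_mul_eq_one_left h

-- L8
lemma sum_with_indicator (k : ℕ) (hk1 : 1 ≤ k) (hk2 : k ≤ p-2) (r r' : ZMod p)
    (hsum : ∀ m, 0 < m → (∑ t : ZMod p, t^m) = if (p-1) ∣ m then -1 else 0) :
    ∑ t : ZMod p, t^k * (t - r)^(p-2) * (t - r')^(p-1)
      = -(k : ZMod p) * r^(k-1) - r'^k * (r' - r)^(p-2) := by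
  classical
  have hp3 : 3 ≤ p := by omega
  have hpt : ∀ t : ZMod p, t^k * (t - r)^(p-2) * (t - r')^(p-1)
      = t^k * (t - r)^(p-2) - (if t = r' then r'^k * (r' - r)^(p-2) else 0) := by
    intro t
    by_cases ht : t = r'
    · subst ht
      rw [if_pos rfl, sub_self, zero_pow (by omega : p - 1 ≠ 0), mul_zero, sub_self]
    · rw [if_neg ht, ZMod.pow_card_sub_one_eq_one (sub_ne_zero.2 ht), mul_one, sub_zero]
  simp_rw [hpt]
  rw [Finset.sum_sub_distrib, Finset.sum_ite_eq' Finset.univ r']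
  simp only [Finset.mem_univ, if_true]
  rw [sum_pow_mul_inv k hk1 hk2 r hsum]

-- L9
lemma partial_fraction (r₁ r₂ : ZMod p) (h12 : r₁ ≠ r₂) (hp3 : 3 ≤ p) (t : ZMod p) :
    ((t - r₁) * (t - r₂))^(p-2)
      = (r₁ - r₂)^(p-2) * ((t - r₁)^(p-2) * (t - r₂)^(p-1)
          - (t - r₂)^(p-2) * (t - r₁)^(p-1)) := by
  have hd : r₁ - r₂ ≠ 0 := sub_ne_zero.2 h12
  have hp2 : p - 2 ≠ 0 := by omega
  have hp1 : p - 1 ≠ 0 := by omega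
  by_cases h1 : t = r₁
  · subst h1
    simp [zero_pow hp2, zero_pow hp1]
  · by_cases h2 : t = r₂
    · subst h2
      simp [zero_pow hp2, zero_pow hp1]
    · have ha : t - r₁ ≠ 0 := sub_ne_zero.2 h1
      have hb : t - r₂ ≠ 0 := sub_ne_zero.2 h2
      rw [pow_psub2 _ hd hp3, pow_psub2 _ ha hp3, pow_psub2 _ hb hp3,
        pow_psub2 _ (mul_ne_zero ha hb) hp3,
        ZMod.pow_card_sub_one_eq_one ha, ZMod.pow_card_sub_one_eq_one hb]
      field_simp
      ring



lemma two_ne_zero' (hodd : p % 2 = 1) : (2 : ZMod p) ≠ 0 := by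
  intro h
  have h' : ((2:ℕ) : ZMod p) = 0 := by exact_mod_cast h
  rw [ZMod.natCast_eq_zero_iff] at h'
  have := Nat.le_of_dvd (by norm_num) h'
  have := hp.out.two_le
  omega

-- L10: closed form
lemma cu_closed (hodd : p % 2 = 1) (hp3 : 3 ≤ p) (s : ZMod p) (hs : s^2 = -1)
    (k : ℕ) (hk1 : 1 ≤ k) (hk2 : k ≤ p-2) :
    cu p k = (-4 : ZMod p)⁻¹ *
      (-(k : ZMod p) * (2*s) * ((-1+s)^(k-1) - (-1-s)^(k-1)) + ((-1+s)^k + (-1-s)^k)) := by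
  classical
  have hsum : ∀ m, 0 < m → (∑ t : ZMod p, t^m) = if (p-1) ∣ m then -1 else 0 :=
    fun m hm => sum_pow_zmod m hm
  set r₁ : ZMod p := -1 + s with hr₁
  set r₂ : ZMod p := -1 - s with hr₂
  have h2 : (2 : ZMod p) ≠ 0 := two_ne_zero' hodd
  have hs0 : s ≠ 0 := fun h => by
    rw [h] at hs
    have h1 : (1 : ZMod p) = 0 := by linear_combination hs
    exact one_ne_zero h1
  have hd : (2*s : ZMod p) ≠ 0 := mul_ne_zero h2 hs0
  have h4 : (-4 : ZMod p) ≠ 0 := by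
    intro h
    have h1 : (2 : ZMod p) * 2 = 0 := by linear_combination -h
    rcases mul_eq_zero.1 h1 with h' | h' <;> exact h2 h'
  have hd12 : r₁ - r₂ = 2*s := by rw [hr₁, hr₂]; ring
  have h12 : r₁ ≠ r₂ := by
    intro h
    apply hd
    rw [← hd12, h, sub_self]
  have h0 : cu p k = ∑ t : ZMod p, t^k * hf p t := by
    rw [cu, sum_units_eq (fun t => t^k * hf p t) (by simp [zero_pow (by omega : k ≠ 0)])]
  rw [h0]
  have hq : ∀ t : ZMod p, hf p t = ((t - r₁) * (t - r₂))^(p-2) := by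
    intro t
    rw [hf]
    congr 1
    rw [hr₁, hr₂]
    linear_combination hs
  have h3 : ∀ t : ZMod p, t^k * hf p t
      = (r₁-r₂)^(p-2) * (t^k * (t - r₁)^(p-2) * (t - r₂)^(p-1))
        - (r₁-r₂)^(p-2) * (t^k * (t - r₂)^(p-2) * (t - r₁)^(p-1)) := by
    intro t
    rw [hq t, partial_fraction r₁ r₂ h12 hp3 t]
    ring
  simp_rw [h3]
  rw [Finset.sum_sub_distrib, ← Finset.mul_sum, ← Finset.mul_sum]
  rw [sum_with_indicator k hk1 hk2 r₁ r₂ hsum, sum_with_indicator k hk1 hk2 r₂ r₁ hsum]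
  have hne12 : r₂ - r₁ = -(2*s) := by rw [hr₁, hr₂]; ring
  have hoddp2 : Odd (p - 2) := by
    rcases Nat.even_or_odd (p-2) with h | h
    · obtain ⟨r, hr⟩ := h; omega
    · exact h
  rw [hd12, hne12, Odd.neg_pow hoddp2]
  rw [pow_psub2 _ hd hp3]
  have hm4 : (2*s)⁻¹ * (2*s)⁻¹ = (-4 : ZMod p)⁻¹ := by
    rw [← mul_inv]
    congr 1
    linear_combination 4 * hs
  have hw1 : (2*s)⁻¹ = (-4 : ZMod p)⁻¹ * (2*s) := by
    rw [← hm4, mul_assoc, inv_mul_cancel₀ hd, mul_one]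
  linear_combination (-(k:ZMod p) * (r₁^(k-1) - r₂^(k-1))) * hw1
    + (r₁^k + r₂^k) * hm4



section eval
variable (hodd : p % 2 = 1) (hp3 : 3 ≤ p) (s : ZMod p) (hs : s^2 = -1)

lemma r1sq (hs : s^2 = -1) : (-1+s)^2 = -(2*s) := by linear_combination hs
lemma r2sq (hs : s^2 = -1) : (-1-s)^2 = 2*s := by linear_combination hs

include hodd hp3 hs

lemma cu_eval_A (m : ℕ) (hm : Odd m) (hm1 : 1 ≤ m) (hk2 : 2*m ≤ p-2) :
    cu p (2*m) = (-4 : ZMod p)⁻¹ * (-(2*(m:ZMod p)) * (2*s)^(m+1)) := by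
  rw [cu_closed hodd hp3 s hs (2*m) (by omega) hk2]
  have h1 : 2*m - 1 = 2*(m-1)+1 := by omega
  have h2 : ∀ x : ZMod p, x^(2*m) = (x^2)^m := fun x => by rw [← pow_mul]
  have h3 : ∀ x : ZMod p, x^(2*(m-1)+1) = (x^2)^(m-1) * x := fun x => by
    rw [pow_succ, ← pow_mul]
  rw [h1, h2, h2, h3, h3, r1sq s hs, r2sq s hs]
  have hneg : (-(2*s))^m = -((2*s)^m) := Odd.neg_pow hm _
  have hneg2 : (-(2*s))^(m-1) = (2*s)^(m-1) := Even.neg_pow (by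
    rcases hm with ⟨a, ha⟩; exact ⟨a, by omega⟩) _
  rw [hneg, hneg2]
  have hms : (2*s)^(m-1) * (2*s)^2 = (2*s)^(m+1) := by
    rw [← pow_add]; congr 1; omega
  push_cast
  linear_combination (-2*(m:ZMod p)*(-4:ZMod p)⁻¹) * hms

lemma cu_eval_B (m : ℕ) (hm : Even m) (hm1 : 1 ≤ m) (hk2 : 2*m ≤ p-2) :
    cu p (2*m) = (-4 : ZMod p)⁻¹ * ((2 - 4*(m:ZMod p)) * (2*s)^m) := by
  rw [cu_closed hodd hp3 s hs (2*m) (by omega) hk2]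
  have h1 : 2*m - 1 = 2*(m-1)+1 := by omega
  have h2 : ∀ x : ZMod p, x^(2*m) = (x^2)^m := fun x => by rw [← pow_mul]
  have h3 : ∀ x : ZMod p, x^(2*(m-1)+1) = (x^2)^(m-1) * x := fun x => by
    rw [pow_succ, ← pow_mul]
  rw [h1, h2, h2, h3, h3, r1sq s hs, r2sq s hs]
  have hneg : (-(2*s))^m = (2*s)^m := Even.neg_pow hm _
  have hneg2 : (-(2*s))^(m-1) = -((2*s)^(m-1)) := Odd.neg_pow (by
    rcases hm with ⟨a, ha⟩; exact ⟨a-1, by omega⟩) _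
  rw [hneg, hneg2]
  have hms : (2*s)^(m-1) * (2*s) = (2*s)^m := by
    rw [← pow_succ]; congr 1; omega
  push_cast
  linear_combination (-4*(m:ZMod p)*(-4:ZMod p)⁻¹) * hms

lemma cu_eval_C (m : ℕ) (hm : Even m) (hk2 : 2*m+1 ≤ p-2) :
    cu p (2*m+1) = (-4 : ZMod p)⁻¹ * (-2 * (2*s)^m) := by
  rw [cu_closed hodd hp3 s hs (2*m+1) (by omega) (by omega)]
  have h1 : 2*m+1-1 = 2*m := by omega
  have h2 : ∀ x : ZMod p, x^(2*m) = (x^2)^m := fun x => by rw [← pow_mul]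
  have h3 : ∀ x : ZMod p, x^(2*m+1) = (x^2)^m * x := fun x => by
    rw [pow_succ, ← pow_mul]
  rw [h1, h2, h2, h3, h3, r1sq s hs, r2sq s hs]
  rw [Even.neg_pow hm]
  ring

lemma cu_eval_D (m : ℕ) (hm : Odd m) (hk2 : 2*m+1 ≤ p-2) :
    cu p (2*m+1) = (-4 : ZMod p)⁻¹ * ((4*(m:ZMod p)+1) * (2*s)^(m+1)) := by
  rw [cu_closed hodd hp3 s hs (2*m+1) (by omega) (by omega)]
  have h1 : 2*m+1-1 = 2*m := by omega
  have h2 : ∀ x : ZMod p, x^(2*m) = (x^2)^m := fun x => by rw [← pow_mul]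
  have h3 : ∀ x : ZMod p, x^(2*m+1) = (x^2)^m * x := fun x => by
    rw [pow_succ, ← pow_mul]
  rw [h1, h2, h2, h3, h3, r1sq s hs, r2sq s hs]
  rw [Odd.neg_pow hm]
  have hms : (2*s)^m * (2*s) = (2*s)^(m+1) := by rw [← pow_succ]
  push_cast
  linear_combination ((-4:ZMod p)⁻¹ * (4*(m:ZMod p)+1)) * hms

end eval



lemma natCast_ne_zero' {a : ℕ} (h1 : 0 < a) (h2 : a < p) : (a : ZMod p) ≠ 0 := by
  intro h
  rw [ZMod.natCast_eq_zero_iff] at h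
  have := Nat.le_of_dvd h1 h
  omega

-- L5: pairing
lemma cu_pair (hodd : p % 2 = 1) (a b : ℕ)
    (hdvd : (p-1) ∣ (a + b + 2*p - 4)) :
    cu p a = 2^(a + p - 2) * cu p b := by
  classical
  have hp3 : 3 ≤ p := by have := hp.out.two_le; omega
  have h2 : (2 : ZMod p) ≠ 0 := two_ne_zero' hodd
  have h2u : IsUnit (2 : ZMod p) := h2.isUnit
  set tw : (ZMod p)ˣ := h2u.unit with htw
  have htwv : (tw : ZMod p) = 2 := h2u.unit_spec
  set e : (ZMod p)ˣ ≃ (ZMod p)ˣ :=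
    (Equiv.inv (ZMod p)ˣ).trans (Equiv.mulLeft tw) with he
  have hmain : ∀ u : (ZMod p)ˣ,
      ((e u : ZMod p))^a * hf p (e u) = 2^(a + p - 2) * ((u : ZMod p)^b * hf p u) := by
    intro u
    set x : ZMod p := (u : ZMod p) with hx
    have hx0 : x ≠ 0 := u.ne_zero
    have heu : e u = tw * u⁻¹ := rfl
    have hev : ((e u : ZMod p)) = 2 * x⁻¹ := by
      rw [heu, Units.val_mul, htwv, Units.val_inv_eq_inv_val]
    rw [hev]
    have hbase : (2*x⁻¹)^2 + 2*(2*x⁻¹) + 2 = 2 * (x⁻¹)^2 * (x^2 + 2*x + 2) := by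
      field_simp
      ring
    have hhf : hf p (2*x⁻¹) = 2^(p-2) * ((x⁻¹)^2)^(p-2) * hf p x := by
      rw [hf, hf, hbase, mul_pow, mul_pow]
    rw [hhf, mul_pow]
    have hxb : (x⁻¹)^a * ((x⁻¹)^2)^(p-2) = x^b := by
      rw [← pow_mul, ← pow_add, inv_pow]
      apply inv_eq_of_mul_eq_one_right
      rw [← pow_add]
      obtain ⟨c, hc⟩ := hdvd
      have : a + 2*(p-2) + b = (p-1) * c := by omega
      rw [this, pow_mul, ZMod.pow_card_sub_one_eq_one hx0, one_pow]
    calc 2^a * (x⁻¹)^a * (2^(p-2) * ((x⁻¹)^2)^(p-2) * hf p x)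
        = (2^a * 2^(p-2)) * ((x⁻¹)^a * ((x⁻¹)^2)^(p-2)) * hf p x := by ring
      _ = 2^(a+p-2) * (x^b * hf p x) := by
          rw [← pow_add, hxb]
          have : a + (p-2) = a + p - 2 := by omega
          rw [this]; ring
  rw [cu, ← Equiv.sum_comp e (fun u => ((u : ZMod p))^a * hf p u)]
  rw [Finset.sum_congr rfl (fun u _ => hmain u), ← Finset.mul_sum, cu]

lemma two_pow_half_eq_one (hp8 : p % 8 = 1) : (2 : ZMod p)^((p-1)/2) = 1 := by
  have hodd : p % 2 = 1 := by omega
  have hsq : IsSquare (2 : ZMod p) := by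
    rw [ZMod.exists_sq_eq_two_iff (by omega : p ≠ 2)]
    left; exact hp8
  obtain ⟨y, hy⟩ := hsq
  have hy0 : y ≠ 0 := by
    intro h; rw [h, mul_zero] at hy; exact two_ne_zero' hodd hy
  rw [hy, ← pow_two]
  rw [← pow_mul]
  have : 2 * ((p-1)/2) = p - 1 := by omega
  rw [this, ZMod.pow_card_sub_one_eq_one hy0]

lemma two_pow_half_eq_neg_one (hp8 : p % 8 = 5) : (2 : ZMod p)^((p-1)/2) = -1 := by
  have hodd : p % 2 = 1 := by omega
  have hnsq : ¬ IsSquare (2 : ZMod p) := by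
    rw [ZMod.exists_sq_eq_two_iff (by omega : p ≠ 2)]
    omega
  have h2 : (2 : ZMod p) ≠ 0 := two_ne_zero' hodd
  have hsq1 : (2 : ZMod p)^((p-1)/2) * (2 : ZMod p)^((p-1)/2) = 1 := by
    rw [← pow_add]
    have : (p-1)/2 + (p-1)/2 = p - 1 := by omega
    rw [this, ZMod.pow_card_sub_one_eq_one h2]
  rcases mul_self_eq_one_iff.1 hsq1 with h | h
  · exfalso
    apply hnsq
    rw [ZMod.euler_criterion p h2]
    have : p / 2 = (p-1)/2 := by omega
    rw [this]; exact h
  · exact h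

lemma cu_mid_zero (hp8 : p % 8 = 5) : cu p ((p+1)/2) = 0 := by
  have hodd : p % 2 = 1 := by omega
  have hp5 : 5 ≤ p := by have := hp.out.two_le; omega
  have hpair := cu_pair hodd ((p+1)/2) ((p+1)/2) (⟨3, by omega⟩)
  have hexp : (p+1)/2 + p - 2 = 3 * ((p-1)/2) := by omega
  rw [hexp, pow_mul', two_pow_half_eq_neg_one hp8] at hpair
  have : cu p ((p+1)/2) + cu p ((p+1)/2) = 0 := by
    nth_rewrite 1 [hpair]; ring
  have h2 : (2 : ZMod p) ≠ 0 := two_ne_zero' hodd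
  have h22 : (2:ZMod p) * cu p ((p+1)/2) = 0 := by linear_combination this
  rcases mul_eq_zero.1 h22 with h | h
  · exact absurd h h2
  · exact h



lemma cu_ne_zero (hp8 : p % 8 = 1) (s : ZMod p) (hs : s^2 = -1)
    (k : ℕ) (hk1 : 1 ≤ k) (hk2 : k ≤ p-2) : cu p k ≠ 0 := by
  have hodd : p % 2 = 1 := by omega
  have hp3 : 3 ≤ p := by have := hp.out.two_le; omega
  have h2 : (2 : ZMod p) ≠ 0 := two_ne_zero' hodd
  have hs0 : s ≠ 0 := fun h => by
    rw [h] at hs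
    exact one_ne_zero (show (1:ZMod p) = 0 by linear_combination hs)
  have hd : (2*s : ZMod p) ≠ 0 := mul_ne_zero h2 hs0
  have h4 : (-4 : ZMod p) ≠ 0 := by
    intro h
    have h1 : (2 : ZMod p) * 2 = 0 := by linear_combination -h
    rcases mul_eq_zero.1 h1 with h' | h' <;> exact h2 h'
  have hu : (-4 : ZMod p)⁻¹ ≠ 0 := inv_ne_zero h4
  rcases Nat.even_or_odd k with hk | hk
  · obtain ⟨m, hm⟩ := hk
    have hm' : k = 2*m := by omega
    subst hm'
    have hm1 : 1 ≤ m := by omega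
    rcases Nat.even_or_odd m with hme | hmo
    · rw [cu_eval_B hodd hp3 s hs m hme hm1 hk2]
      refine mul_ne_zero hu (mul_ne_zero ?_ (pow_ne_zero _ hd))
      intro h
      have h1 : (2:ZMod p) * ((2*m-1 : ℕ) : ZMod p) = 0 := by
        push_cast [Nat.cast_sub (by omega : 1 ≤ 2*m)]
        linear_combination -h
      rcases mul_eq_zero.1 h1 with h' | h'
      · exact h2 h'
      · exact natCast_ne_zero' (by omega) (by omega) h'
    · rw [cu_eval_A hodd hp3 s hs m hmo hm1 hk2]
      refine mul_ne_zero hu (mul_ne_zero ?_ (pow_ne_zero _ hd))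
      rw [neg_ne_zero]
      have : ((2*m : ℕ) : ZMod p) ≠ 0 := natCast_ne_zero' (by omega) (by omega)
      push_cast at this
      exact this
  · obtain ⟨m, hm⟩ := hk
    subst hm
    rcases Nat.even_or_odd m with hme | hmo
    · rw [cu_eval_C hodd hp3 s hs m hme hk2]
      exact mul_ne_zero hu (mul_ne_zero (by
        intro h
        exact h2 (by linear_combination -h)) (pow_ne_zero _ hd))
    · rw [cu_eval_D hodd hp3 s hs m hmo hk2]
      refine mul_ne_zero hu (mul_ne_zero ?_ (pow_ne_zero _ hd))
      have : ((4*m+1 : ℕ) : ZMod p) ≠ 0 := by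
        intro h
        rw [ZMod.natCast_eq_zero_iff] at h
        obtain ⟨c, hc⟩ := h
        obtain ⟨a, ha⟩ := hmo
        match c with
        | 0 => omega
        | 1 => omega
        | (c+2) =>
          have : p*2 ≤ p*(c+2) := Nat.mul_le_mul_left p (by omega)
          omega
      push_cast at this
      exact this

lemma cu_zero_ne_zero (hp8 : p % 8 = 1) (s : ZMod p) (hs : s^2 = -1) :
    cu p 0 ≠ 0 := by
  have hodd : p % 2 = 1 := by omega
  have hp9 : 9 ≤ p := by have := hp.out.two_le; omega
  have hpair := cu_pair hodd 0 2 ⟨2, by omega⟩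
  rw [hpair]
  exact mul_ne_zero (pow_ne_zero _ (two_ne_zero' hodd))
    (cu_ne_zero hp8 s hs 2 (by omega) (by omega))


section detpart
variable (p : ℕ) [hp : Fact p.Prime]

noncomputable def nu : Fin (p-1) → ZMod p := fun i => (((i : ℕ) + 1 : ℕ) : ZMod p)

noncomputable def Amat : Matrix (Fin (p-1)) (Fin (p-1)) (ZMod p) :=
  Matrix.of fun i j => ((nu p i)^2 + 2*(nu p i)*(nu p j) + 2*(nu p j)^2)^(p-2)

lemma nu_ne_zero (i : Fin (p-1)) : nu p i ≠ 0 :=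
  natCast_ne_zero' (by omega) (by have := i.2; omega)

lemma nu_inj : Function.Injective (nu p) := by
  intro i j h
  have hvi : ((i:ℕ) + 1 : ℕ) < p := by have := i.2; omega
  have hvj : ((j:ℕ) + 1 : ℕ) < p := by have := j.2; omega
  have := congrArg ZMod.val h
  simp only [nu] at this
  rw [ZMod.val_cast_of_lt hvi, ZMod.val_cast_of_lt hvj] at this
  exact Fin.ext (by omega)

noncomputable def nuU : Fin (p-1) → (ZMod p)ˣ := fun i => (nu_ne_zero p i).isUnit.unit

lemma nuU_val (i : Fin (p-1)) : ((nuU p i) : ZMod p) = nu p i :=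
  (nu_ne_zero p i).isUnit.unit_spec

lemma nuU_bij : Function.Bijective (nuU p) := by
  rw [Fintype.bijective_iff_injective_and_card]
  refine ⟨fun i j h => nu_inj p ?_, by rw [Fintype.card_fin, ZMod.card_units]⟩
  rw [← nuU_val p i, ← nuU_val p j, h]

noncomputable def iota : Fin (p-1) ≃ (ZMod p)ˣ := Equiv.ofBijective _ (nuU_bij p)

lemma iota_val (i : Fin (p-1)) : ((iota p i) : ZMod p) = nu p i := nuU_val p i

lemma matrix_identity :
    (Amat p) * (Matrix.of fun j k : Fin (p-1) => nu p j ^ ((k:ℕ) + 2))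
      = (Matrix.vandermonde (nu p)) *
        (Matrix.diagonal (fun k : Fin (p-1) => cu p ((p-1-(k:ℕ)) % (p-1)))) := by
  have hp2 : 2 ≤ p := hp.out.two_le
  ext i k
  rw [Matrix.mul_apply, Matrix.mul_diagonal, Matrix.vandermonde]
  set x : ZMod p := nu p i with hxd
  have hx : x ≠ 0 := nu_ne_zero p i
  -- step 1: pointwise rewrite of the summand
  have claim1 : ∀ j, Amat p i j * (Matrix.of fun j k : Fin (p-1) => nu p j ^ ((k:ℕ) + 2)) j k
      = (nu p j)^(k:ℕ) * hf p (x * (nu p j)⁻¹) := by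
    intro j
    set y : ZMod p := nu p j with hyd
    have hy : y ≠ 0 := nu_ne_zero p j
    have hbase : x^2 + 2*x*y + 2*y^2 = y^2 * ((x*y⁻¹)^2 + 2*(x*y⁻¹) + 2) := by
      field_simp
    have hy2 : (y^2)^(p-2) * y^((k:ℕ)+2) = y^(k:ℕ) := by
      rw [← pow_mul, ← pow_add]
      have he : 2*(p-2) + ((k:ℕ)+2) = (k:ℕ) + (p-1)*2 := by omega
      rw [he, pow_add, pow_mul, ZMod.pow_card_sub_one_eq_one hy, one_pow, mul_one]
    show (x^2 + 2*x*y + 2*y^2)^(p-2) * y^((k:ℕ)+2) = y^(k:ℕ) * hf p (x * y⁻¹)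
    rw [hbase, mul_pow, hf]
    calc (y ^ 2) ^ (p - 2) * ((x * y⁻¹) ^ 2 + 2 * (x * y⁻¹) + 2) ^ (p - 2) * y ^ ((k:ℕ) + 2)
        = ((y^2)^(p-2) * y^((k:ℕ)+2)) * ((x * y⁻¹) ^ 2 + 2 * (x * y⁻¹) + 2) ^ (p - 2) := by
          ring
      _ = y^(k:ℕ) * ((x * y⁻¹) ^ 2 + 2 * (x * y⁻¹) + 2) ^ (p - 2) := by rw [hy2]
  rw [Finset.sum_congr rfl (fun j _ => claim1 j)]
  -- step 2: sum over Fin (p-1) = sum over units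
  have step2 : ∑ j, (nu p j)^(k:ℕ) * hf p (x * (nu p j)⁻¹)
      = ∑ u : (ZMod p)ˣ, ((u:ZMod p))^(k:ℕ) * hf p (x * ((u:ZMod p))⁻¹) := by
    rw [← Equiv.sum_comp (iota p) (fun u : (ZMod p)ˣ => ((u:ZMod p))^(k:ℕ) * hf p (x * ((u:ZMod p))⁻¹))]
    exact Finset.sum_congr rfl (fun j _ => by rw [iota_val])
  rw [step2]
  -- step 3: reindex by u ↦ (nuU i) * u⁻¹
  set e : (ZMod p)ˣ ≃ (ZMod p)ˣ :=
    (Equiv.inv (ZMod p)ˣ).trans (Equiv.mulLeft (nuU p i)) with he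
  rw [← Equiv.sum_comp e (fun u : (ZMod p)ˣ => ((u:ZMod p))^(k:ℕ) * hf p (x * ((u:ZMod p))⁻¹))]
  have step4 : ∀ u : (ZMod p)ˣ,
      ((e u : ZMod p))^(k:ℕ) * hf p (x * ((e u : ZMod p))⁻¹)
      = x^(k:ℕ) * (((u:ZMod p))^((p-1-(k:ℕ)) % (p-1)) * hf p u) := by
    intro u
    have hu : (u : ZMod p) ≠ 0 := u.ne_zero
    have heu : e u = nuU p i * u⁻¹ := rfl
    have hev : ((e u : ZMod p)) = x * ((u:ZMod p))⁻¹ := by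
      rw [heu, Units.val_mul, nuU_val, Units.val_inv_eq_inv_val, hxd]
    have harg : x * (x * ((u:ZMod p))⁻¹)⁻¹ = (u : ZMod p) := by
      field_simp
    have hpow : ((x * ((u:ZMod p))⁻¹))^(k:ℕ) = x^(k:ℕ) * (((u:ZMod p))⁻¹)^(k:ℕ) := mul_pow _ _ _
    have hinvpow : (((u:ZMod p))⁻¹)^(k:ℕ) = ((u:ZMod p))^((p-1-(k:ℕ)) % (p-1)) := by
      by_cases hk0 : (k:ℕ) = 0
      · rw [hk0, pow_zero, Nat.sub_zero, Nat.mod_self, pow_zero]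
      · have hlt : (k:ℕ) < p-1 := k.2
        have hmod : (p-1-(k:ℕ)) % (p-1) = p-1-(k:ℕ) := Nat.mod_eq_of_lt (by omega)
        rw [hmod, inv_pow]
        apply inv_eq_of_mul_eq_one_right
        rw [← pow_add]
        have : (k:ℕ) + (p-1-(k:ℕ)) = p-1 := by omega
        rw [this]
        exact ZMod.pow_card_sub_one_eq_one hu
    rw [hev, harg, hpow, hinvpow]
    ring
  rw [Finset.sum_congr rfl (fun u _ => step4 u), ← Finset.mul_sum]
  rw [cu]
  simp only [Matrix.of_apply]
  rw [hxd]

lemma nu_prod : ∏ j : Fin (p-1), nu p j = -1 := by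
  have h1 : ∏ j : Fin (p-1), nu p j = ∏ u : (ZMod p)ˣ, (u : ZMod p) := by
    rw [← Equiv.prod_comp (iota p) (fun u : (ZMod p)ˣ => (u : ZMod p))]
    exact Finset.prod_congr rfl (fun j _ => by rw [iota_val])
  have h2 : ∏ u : (ZMod p)ˣ, (u : ZMod p)
      = ((∏ u : (ZMod p)ˣ, u : (ZMod p)ˣ) : ZMod p) :=
    (map_prod (Units.coeHom (ZMod p)) _ _).symm
  rw [h1, h2, FiniteField.prod_univ_units_id_eq_neg_one, Units.val_neg, Units.val_one]

lemma det_Amat : (Amat p).det = ∏ k : Fin (p-1), cu p (k:ℕ) := by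
  have hp2 : 2 ≤ p := hp.out.two_le
  have hn : 0 < p - 1 := by omega
  have hId := congrArg Matrix.det (matrix_identity p)
  have hW2 : (Matrix.of fun j k : Fin (p-1) => nu p j ^ ((k:ℕ) + 2))
      = (Matrix.diagonal fun j => nu p j ^ 2) * Matrix.vandermonde (nu p) := by
    ext j k
    rw [Matrix.diagonal_mul]
    show nu p j ^ ((k:ℕ) + 2) = nu p j ^ 2 * nu p j ^ (k:ℕ)
    rw [pow_add]
    ring
  rw [hW2, det_mul, det_mul, det_mul, det_diagonal, det_diagonal] at hId
  have hprod : ∏ j : Fin (p-1), nu p j ^ 2 = 1 := by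
    rw [Finset.prod_pow, nu_prod, neg_one_sq]
  rw [hprod, one_mul] at hId
  have hWne : (Matrix.vandermonde (nu p)).det ≠ 0 :=
    (Matrix.det_vandermonde_ne_zero_iff).2 (nu_inj p)
  rw [mul_comm ((Matrix.vandermonde (nu p)).det)] at hId
  have hdet := mul_right_cancel₀ hWne hId
  rw [hdet]
  -- reindex the product
  have hφlt : ∀ k : Fin (p-1), (p-1-(k:ℕ)) % (p-1) < p-1 := fun k => Nat.mod_lt _ hn
  set φ : Fin (p-1) → Fin (p-1) := fun k => ⟨(p-1-(k:ℕ)) % (p-1), hφlt k⟩ with hφ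
  have hinv : Function.Involutive φ := by
    intro k
    apply Fin.ext
    show (p-1-((p-1-(k:ℕ)) % (p-1))) % (p-1) = (k:ℕ)
    have hk := k.2
    by_cases hk0 : (k:ℕ) = 0
    · rw [hk0, Nat.sub_zero, Nat.mod_self, Nat.sub_zero, Nat.mod_self]
    · have h1 : (p-1-(k:ℕ)) % (p-1) = p-1-(k:ℕ) := Nat.mod_eq_of_lt (by omega)
      rw [h1, Nat.mod_eq_of_lt (by omega)]
      omega
  exact Fintype.prod_bijective φ hinv.bijective _ _ (fun k => rfl)

lemma Dp_cast : ((Dp p 2 2 : ℤ) : ZMod p) = (Amat p).det := by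
  rw [Dp]
  refine (RingHom.map_det (Int.castRingHom (ZMod p)) _).trans ?_
  congr 1
  ext i j
  simp only [RingHom.mapMatrix_apply, Matrix.map_apply, Matrix.of_apply, Amat, nu, eq_intCast]
  push_cast
  ring
end detpart


end Stmt1

open Stmt1

theorem stmt1 (p : ℕ) [Fact p.Prime] (hp4 : p % 4 = 1) :
    (p % 8 = 1 → legendreSym p (Dp p 2 2) = 1) ∧
    (p % 8 = 5 → legendreSym p (Dp p 2 2) = 0) := by
  have hPrime : p.Prime := Fact.out
  have hp2 := hPrime.two_le
  have hodd : p % 2 = 1 := by omega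
  have hp5 : 5 ≤ p := by omega
  obtain ⟨s, hs⟩ : ∃ s : ZMod p, s^2 = -1 := by
    have h := (ZMod.exists_sq_eq_neg_one_iff (p := p)).2 (by omega)
    obtain ⟨s', hs'⟩ := h
    exact ⟨s', by rw [pow_two, ← hs']⟩
  have hdet : ((Dp p 2 2 : ℤ) : ZMod p) = ∏ k : Fin (p-1), cu p (k:ℕ) := by
    rw [Dp_cast p, det_Amat p]
  constructor
  · -- p % 8 = 1
    intro hp8
    have hp17 : 17 ≤ p := by
      rcases Nat.lt_or_ge p 17 with h | h
      · interval_cases p <;> first | (exfalso; revert hp8; decide) | (exfalso; exact absurd hPrime (by decide))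
      · exact h
    have h2 : (2 : ZMod p) ≠ 0 := two_ne_zero' hodd
    have h4 : (-4 : ZMod p) ≠ 0 := by
      intro h
      have h1 : (2 : ZMod p) * 2 = 0 := by linear_combination -h
      rcases mul_eq_zero.1 h1 with h' | h' <;> exact h2 h'
    have h2h : (2:ZMod p)^((p-1)/2) = 1 := two_pow_half_eq_one hp8
    have hsh : s^((p-1)/2) = 1 := by
      have he : (p-1)/2 = 2 * ((p-1)/4) := by omega
      rw [he, pow_mul, hs]
      exact Even.neg_one_pow ⟨(p-1)/8, by omega⟩
    have hcu_ne : ∀ k : Fin (p-1), cu p (k:ℕ) ≠ 0 := by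
      intro k
      rcases Nat.eq_zero_or_pos (k:ℕ) with h0 | h1
      · rw [h0]; exact cu_zero_ne_zero hp8 s hs
      · exact cu_ne_zero hp8 s hs _ h1 (by have := k.2; omega)
    -- the common value of (cu k)^((p-1)/2) at fixed points
    have hfix : ∀ m : ℕ, Even m → 2*m+1 ≤ p-2 →
        (cu p (2*m+1))^((p-1)/2) = ((2*s)^((p-1)/2))^m := by
      intro m hm hmle
      rw [cu_eval_C hodd (by omega) s hs m hm hmle]
      have hsplit : (-4 : ZMod p)⁻¹ * (-2 * (2*s)^m) = ((-4:ZMod p)⁻¹ * (-2)) * (2*s)^m := by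
        ring
      have hinv2 : (-4 : ZMod p)⁻¹ * (-2) = 2⁻¹ := by
        field_simp
        rw [show (4:ZMod p) = 2*2 by norm_num, pow_two, div_self (mul_ne_zero h2 h2)]
      rw [hsplit, hinv2, mul_pow, inv_pow, h2h, inv_one, one_mul, pow_right_comm]
    have h2sh : (2*s : ZMod p)^((p-1)/2) = 1 := by
      rw [mul_pow, h2h, hsh, one_mul]
    have hprodh : ∏ k : Fin (p-1), (cu p (k:ℕ))^((p-1)/2) = 1 := by
      have hψlt : ∀ k : Fin (p-1), (if (k:ℕ) ≤ 2 then 2 - (k:ℕ) else p+1-(k:ℕ)) < p - 1 := by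
        intro k; have := k.2; split <;> omega
      set ψ : Fin (p-1) → Fin (p-1) := fun k => ⟨_, hψlt k⟩ with hψ
      have hψval : ∀ k : Fin (p-1), (ψ k : ℕ) = if (k:ℕ) ≤ 2 then 2 - (k:ℕ) else p+1-(k:ℕ) :=
        fun k => rfl
      apply Finset.prod_ninvolution ψ
      · intro k
        have hsum2 : (k:ℕ) + (ψ k : ℕ) = 2 ∨ (k:ℕ) + (ψ k : ℕ) = p+1 := by
          rw [hψval]; have := k.2; split <;> omega
        have hdvd : (p-1) ∣ ((k:ℕ) + (ψ k:ℕ) + 2*p - 4) := by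
          rcases hsum2 with h | h <;> rw [h]
          · exact ⟨2, by omega⟩
          · exact ⟨3, by omega⟩
        have hpair := cu_pair hodd (k:ℕ) (ψ k:ℕ) hdvd
        rw [hpair, mul_pow, pow_right_comm, h2h, one_pow, one_mul, ← pow_add]
        have hhh : (p-1)/2 + (p-1)/2 = p - 1 := by omega
        rw [hhh]
        exact ZMod.pow_card_sub_one_eq_one (hcu_ne (ψ k))
      · intro k hne heq
        apply hne
        have hkval := congrArg Fin.val heq
        rw [hψval] at hkval
        have hk2 := k.2
        by_cases hc : (k:ℕ) ≤ 2
        · rw [if_pos hc] at hkval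
          have hk1 : (k:ℕ) = 1 := by omega
          have h1 : (k:ℕ) = 2*0+1 := by omega
          rw [h1, hfix 0 (⟨0, rfl⟩) (by omega), pow_zero]
        · rw [if_neg hc] at hkval
          have hk1 : (k:ℕ) = 2*((p-1)/4)+1 := by omega
          rw [hk1, hfix ((p-1)/4) (⟨(p-1)/8, by omega⟩) (by omega), h2sh, one_pow]
      · intro k; exact Finset.mem_univ _
      · intro k
        apply Fin.ext
        rw [hψval, hψval]
        have := k.2
        by_cases hc : (k:ℕ) ≤ 2
        · rw [if_pos hc]
          split <;> omega
        · rw [if_neg hc]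
          split <;> omega
    set P := ∏ k : Fin (p-1), cu p (k:ℕ) with hP
    have hPh : P^((p-1)/2) = 1 := by rw [hP, ← Finset.prod_pow]; exact hprodh
    have hPne : P ≠ 0 := by
      intro h
      rw [h, zero_pow (by omega : (p-1)/2 ≠ 0)] at hPh
      exact zero_ne_one hPh
    have hcast_ne : ((Dp p 2 2 : ℤ) : ZMod p) ≠ 0 := by rw [hdet]; exact hPne
    rw [legendreSym.eq_one_iff p hcast_ne, hdet]
    rw [ZMod.euler_criterion p hPne]
    have : p / 2 = (p-1)/2 := by omega
    rw [this]
    exact hPh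
  · intro hp8
    rw [legendreSym.eq_zero_iff, hdet]
    exact Finset.prod_eq_zero (Finset.mem_univ (⟨(p+1)/2, by omega⟩ : Fin (p-1)))
      (cu_mid_zero hp8)
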